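/- Let (K, v, ac_K) and (L, w, ac_L) be valued fields with angular component maps. Let φ : K → L be an embedding of valued fields preserving the angular component (ac_L ∘ φ = φ_r ∘ ac_K for the induced residue field embedding φ_r), and let ψ : K → L be an embedding of valued fields such that w(φ(a) − ψ(a)) > w(φ(b)) for all a ∈ K and all b ∈ K^×. Then ac_L(φ(b)) = ac_L(ψ(b)) for every b ∈ K, and hence ψ also preserves the angular component. -/

import Mathlib

/-!
STATEMENT 6.  Multiplicative valuations: the additive hypothesis
`w(φ(a) − ψ(a)) > w(φ(b))` for all `b ∈ K^×` becomes `w (φ a - ψ a) < w (φ b)`.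
Angular components are as in the paper, valued in the residue field
`IsLocalRing.ResidueField (valuationSubring)`; "`φ` preserves the angular component"
is expressed via the induced residue-field embedding `φr`.
-/

noncomputable def resOf {L Γ₀ : Type*} [Field L] [LinearOrderedCommGroupWithZero Γ₀]
    (w : Valuation L Γ₀) (x : L) : IsLocalRing.ResidueField w.valuationSubring :=
  if h : w x ≤ 1 then IsLocalRing.residue _ (⟨x, h⟩ : w.valuationSubring) else 0

structure AngComp {L Γ₀ : Type*} [Field L] [LinearOrderedCommGroupWithZero Γ₀]
    (w : Valuation L Γ₀) where
  toFun : L → IsLocalRing.ResidueField w.valuationSubring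
  zero_iff : ∀ x, toFun x = 0 ↔ x = 0
  map_mul : ∀ x y, toFun (x * y) = toFun x * toFun y
  res_eq : ∀ x, w x = 1 → toFun x = resOf w x

-- key lemma: if w(u-1) < 1 then acL u = 1
lemma ac_eq_one {L Γ₀ : Type*} [Field L] [LinearOrderedCommGroupWithZero Γ₀]
    {w : Valuation L Γ₀} (ac : AngComp w) {u : L} (h : w (u - 1) < 1) :
    ac.toFun u = 1 := by
  have hu : w u = 1 := by
    have := Valuation.map_one_add_of_lt (v := w) (x := u - 1) h
    simpa using this
  rw [ac.res_eq u hu, resOf, dif_pos hu.le]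
  have h1 : (⟨u, hu.le⟩ : w.valuationSubring) - 1 ∈ IsLocalRing.maximalIdeal w.valuationSubring := by
    rw [ValuationSubring.valuation_lt_one_iff]
    exact (Valuation.isEquiv_valuation_valuationSubring w).lt_one_iff_lt_one.mp (by simpa using h)
  have := (Ideal.Quotient.eq_zero_iff_mem).mpr h1
  have : IsLocalRing.residue _ ((⟨u, hu.le⟩ : w.valuationSubring) - 1) = 0 := this
  rw [map_sub, map_one, sub_eq_zero] at this
  exact this

theorem statement6 {K L Γ₀ Δ₀ : Type*} [Field K] [Field L]
    [LinearOrderedCommGroupWithZero Γ₀] [LinearOrderedCommGroupWithZero Δ₀]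
    (v : Valuation K Γ₀) (w : Valuation L Δ₀)
    (acK : AngComp v) (acL : AngComp w)
    (φ ψ : K →+* L)
    (hφval : ∀ x y : K, v x ≤ v y ↔ w (φ x) ≤ w (φ y))
    (hψval : ∀ x y : K, v x ≤ v y ↔ w (ψ x) ≤ w (ψ y))
    (φr : IsLocalRing.ResidueField v.valuationSubring →+*
      IsLocalRing.ResidueField w.valuationSubring)
    (hφac : ∀ x : K, acL.toFun (φ x) = φr (acK.toFun x))
    (hclose : ∀ a b : K, b ≠ 0 → w (φ a - ψ a) < w (φ b)) :
    (∀ b : K, acL.toFun (φ b) = acL.toFun (ψ b)) ∧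
      ∀ x : K, acL.toFun (ψ x) = φr (acK.toFun x) := by
  have main : ∀ b : K, acL.toFun (φ b) = acL.toFun (ψ b) := by
    intro b
    rcases eq_or_ne b 0 with rfl | hb
    · simp [(acL.zero_iff _).mpr (map_zero φ), (acL.zero_iff _).mpr (map_zero ψ)]
    · have hφb : φ b ≠ 0 := fun h => hb (φ.injective (by simpa using h))
      have hwb : w (φ b) ≠ 0 := fun h => hφb ((Valuation.zero_iff w).mp h)
      set u : L := ψ b / φ b with hu
      have hub : ψ b = φ b * u := by rw [hu]; field_simp
      have hlt : w (u - 1) < 1 := by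
        have : u - 1 = (ψ b - φ b) / φ b := by rw [hu, div_sub_one hφb]
        rw [this, map_div₀, div_lt_iff₀ (lt_of_le_of_ne zero_le' (Ne.symm hwb)), one_mul, ← Valuation.map_neg, neg_sub]
        exact hclose b b hb
      rw [hub, acL.map_mul, ac_eq_one acL hlt, mul_one]
  exact ⟨main, fun x => by rw [← main x, hφac]⟩
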